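/- arXiv:1202.6263 — 3 statements merged into one kernel-verified Lean document; each statement's English description precedes it below -/
import Mathlib

section
/- Let p̃ be a probability mass function on ℕ with finite support. There exists a unique p̂ ∈ 𝒦 with ∑_{i≥0} p̂(i)² < ∞ such that Q(p̂) ≤ Q(f) for every f ∈ 𝒦 with ∑_{i≥0} f(i)² < ∞. Moreover, this minimizer p̂ has finite support. -/
open scoped BigOperators

noncomputable section

/-- A discrete function `f : ℕ → ℝ` is convex if
`f(i+1) - 2 f(i) + f(i-1) ≥ 0` for every `i ≥ 1`. -/
def ConvexNat (f : ℕ → ℝ) : Prop :=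
  ∀ i : ℕ, 0 ≤ f (i + 2) - 2 * f (i + 1) + f i

/-- `𝒦`: convex, nonnegative functions on `ℕ` tending to `0` at infinity. -/
def MemK (f : ℕ → ℝ) : Prop :=
  ConvexNat f ∧ (∀ i, 0 ≤ f i) ∧ Filter.Tendsto f Filter.atTop (nhds 0)

/-- `𝒞`: elements of `𝒦` summing to one. -/
def MemC (f : ℕ → ℝ) : Prop := MemK f ∧ ∑' i, f i = 1

/-- The least squares criterion `Q(f) = (1/2) ∑ f(i)² − ∑ f(i) p̃(i)`. -/
def Crit (ptil f : ℕ → ℝ) : ℝ :=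
  (1 / 2) * ∑' i, (f i) ^ 2 - ∑' i, f i * ptil i

/-- A probability mass function on `ℕ` with finite support. -/
def IsFinPMF (p : ℕ → ℝ) : Prop :=
  (∀ i, 0 ≤ p i) ∧ (Function.support p).Finite ∧ ∑' i, p i = 1

/-- `s` is the maximum of the support of `p`. -/
def IsMaxSupport (p : ℕ → ℝ) (s : ℕ) : Prop :=
  p s ≠ 0 ∧ ∀ i, p i ≠ 0 → i ≤ s

open scoped InnerProductSpace

abbrev E2 := lp (fun _ : ℕ => ℝ) 2


lemma memℓp_of_sq_summable {f : ℕ → ℝ} (hf : Summable fun i => f i ^ 2) :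
    Memℓp f 2 := by
  apply memℓp_gen
  simpa [ENNReal.toReal_ofNat, Real.rpow_two, Real.norm_eq_abs, sq_abs] using hf

lemma sq_summable_of_memℓp {f : ℕ → ℝ} (hf : Memℓp f 2) :
    Summable fun i => f i ^ 2 := by
  have := hf.summable (p := 2) (by norm_num)
  simpa [ENNReal.toReal_ofNat, Real.rpow_two, Real.norm_eq_abs, sq_abs] using this

lemma inner_tsum (F G : E2) : ⟪F, G⟫_ℝ = ∑' i, F i * G i := by
  rw [lp.inner_eq_tsum]
  simp [RCLike.inner_apply, mul_comm]

lemma norm_sq_tsum (F : E2) : ‖F‖ ^ 2 = ∑' i, (F i) ^ 2 := by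
  rw [← real_inner_self_eq_norm_sq, inner_tsum]
  simp [sq]

lemma tendsto_zero_of_sq_summable {f : ℕ → ℝ} (hf : Summable fun i => f i ^ 2) :
    Filter.Tendsto f Filter.atTop (nhds 0) := by
  have h1 : Filter.Tendsto (fun i => f i ^ 2) Filter.atTop (nhds 0) :=
    hf.tendsto_atTop_zero
  have h2 : Filter.Tendsto (fun i => Real.sqrt (f i ^ 2)) Filter.atTop (nhds 0) := by
    simpa [Function.comp_def] using (Real.continuous_sqrt.tendsto 0).comp h1
  have h3 : ∀ i, |f i| = Real.sqrt (f i ^ 2) := fun i => (Real.sqrt_sq_eq_abs _).symm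
  have h4 : Filter.Tendsto (fun i => |f i|) Filter.atTop (nhds 0) := by
    simpa [← h3] using h2
  exact tendsto_zero_iff_abs_tendsto_zero f |>.mpr h4

lemma eval_continuous (i : ℕ) : Continuous fun F : E2 => F i := by
  have : LipschitzWith 1 fun F : E2 => F i := by
    refine LipschitzWith.of_dist_le_mul fun F G => ?_
    rw [NNReal.coe_one, one_mul]
    have h : ‖(F - G : E2) i‖ ≤ ‖F - G‖ := lp.norm_apply_le_norm (by norm_num) _ i
    exact (by simpa [lp.coeFn_sub, dist_eq_norm] using h :
        dist (F i) (G i) ≤ dist F G)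
  exact this.continuous

lemma mk_apply (f : ℕ → ℝ) (hf : Memℓp f 2) (i : ℕ) : (⟨f, hf⟩ : E2) i = f i := rfl

/-- triangle function -/
def Tfun (k : ℕ) : ℕ → ℝ := fun i => max ((k : ℝ) - i) 0

lemma Tfun_nonneg (k i : ℕ) : 0 ≤ Tfun k i := le_max_right _ _

lemma Tfun_eq_zero {k i : ℕ} (h : k ≤ i) : Tfun k i = 0 := by
  have : (k : ℝ) ≤ i := by exact_mod_cast h
  simp only [Tfun]
  exact max_eq_right (by linarith)

lemma Tfun_eq {k i : ℕ} (h : i ≤ k) : Tfun k i = (k : ℝ) - i := by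
  have : (i : ℝ) ≤ k := by exact_mod_cast h
  simp only [Tfun]
  exact max_eq_left (by linarith)

lemma Tfun_le (k i : ℕ) : Tfun k i ≤ (k : ℝ) := by
  simp only [Tfun]
  rcases le_or_gt ((k : ℝ) - i) 0 with h | h
  · rw [max_eq_right h]; positivity
  · rw [max_eq_left h.le]
    have : (0 : ℝ) ≤ i := by positivity
    linarith

lemma Tfun_second (k i : ℕ) :
    Tfun k (i + 2) - 2 * Tfun k (i + 1) + Tfun k i = if i + 1 = k then 1 else 0 := by
  by_cases h1 : i + 2 ≤ k
  · rw [Tfun_eq (by omega), Tfun_eq (by omega), Tfun_eq (by omega), if_neg (by omega)]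
    push_cast
    ring
  · by_cases h2 : i + 1 = k
    · rw [Tfun_eq_zero (by omega), Tfun_eq_zero (by omega), Tfun_eq (by omega),
        if_pos h2, ← h2]
      push_cast
      ring
    · rw [Tfun_eq_zero (by omega), Tfun_eq_zero (by omega), Tfun_eq_zero (by omega),
        if_neg h2]
      ring

lemma Tfun_sq_summable (k : ℕ) : Summable fun i => Tfun k i ^ 2 := by
  apply summable_of_ne_finset_zero (s := Finset.range k)
  intro i hi
  rw [Tfun_eq_zero (by simpa using hi)]
  norm_num

lemma support_finite_aux (ptil phat : ℕ → ℝ) (s : ℕ)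
    (hs : ∀ i, ptil i ≠ 0 → i ≤ s)
    (hK : MemK phat)
    (hD0 : ∀ k : ℕ, 0 ≤ ∑ i ∈ Finset.range k, (phat i - ptil i) * ((k : ℝ) - i))
    (hknot : ∀ m : ℕ, (∀ i, 0 < phat i) →
      0 < phat (m + 2) - 2 * phat (m + 1) + phat m →
      ∑ i ∈ Finset.range (m + 1), (phat i - ptil i) * (((m + 1 : ℕ) : ℝ) - i) = 0) :
    (Function.support phat).Finite := by
  obtain ⟨hconv, hnn, hlim⟩ := hK
  by_contra hinf
  -- slopes are monotone
  have dmono : ∀ m n, m ≤ n → phat (m + 1) - phat m ≤ phat (n + 1) - phat n := by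
    intro m n h
    induction n, h using Nat.le_induction with
    | base => exact le_rfl
    | succ n hn ih => have := hconv n; linarith
  -- slopes are nonpositive
  have hdnonpos : ∀ m, phat (m + 1) - phat m ≤ 0 := by
    by_contra h
    push_neg at h
    obtain ⟨m, hm⟩ := h
    have grow : ∀ n, m + 1 ≤ n → phat (m + 1) ≤ phat n := by
      intro n hn
      induction n, hn using Nat.le_induction with
      | base => exact le_rfl
      | succ n hn ih =>
        have h2 : 0 < phat (n + 1) - phat n := lt_of_lt_of_le hm (dmono m n (by omega))
        linarith
    have hc : 0 < phat (m + 1) := by have := hnn m; linarith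
    have hev := hlim.eventually_lt_const hc
    obtain ⟨n, h1, h2⟩ := (hev.and (Filter.eventually_ge_atTop (m + 1))).exists
    linarith [grow n h2]
  have hmono : ∀ m n, m ≤ n → phat n ≤ phat m := by
    intro m n h
    induction n, h using Nat.le_induction with
    | base => exact le_rfl
    | succ n hn ih => have := hdnonpos n; linarith
  -- positivity everywhere
  have hpos : ∀ i, 0 < phat i := by
    by_contra h
    push_neg at h
    obtain ⟨i, hi⟩ := h
    have hz : phat i = 0 := le_antisymm hi (hnn i)
    apply hinf
    apply (Set.finite_Iio i).subset
    intro j hj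
    simp only [Set.mem_Iio]
    by_contra hji
    push_neg at hji
    have : phat j = 0 := le_antisymm (hz ▸ hmono i j hji) (hnn j)
    exact hj this
  -- slopes strictly negative
  have hdneg : ∀ m, phat (m + 1) - phat m < 0 := by
    intro m
    rcases lt_or_eq_of_le (hdnonpos m) with h | h
    · exact h
    · exfalso
      have hconst : ∀ n, m ≤ n → phat n = phat m := by
        intro n hn
        induction n, hn using Nat.le_induction with
        | base => rfl
        | succ n hn ih =>
          have h1 := dmono m n hn
          have h2 := hdnonpos n
          rw [← h] at h2
          linarith
      have hev := hlim.eventually_lt_const (hpos m)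
      obtain ⟨n, h1, h2⟩ := (hev.and (Filter.eventually_ge_atTop m)).exists
      rw [hconst n h2] at h1
      linarith
  -- infinitely many knots
  have hknots : ∀ N : ℕ, ∃ m, N ≤ m ∧ 0 < phat (m + 2) - 2 * phat (m + 1) + phat m := by
    intro N
    by_contra h
    push_neg at h
    have hzero : ∀ m, N ≤ m → phat (m + 2) - 2 * phat (m + 1) + phat m = 0 := fun m hm =>
      le_antisymm (h m hm) (hconv m)
    have hdconst : ∀ n, N ≤ n → phat (n + 1) - phat n = phat (N + 1) - phat N := by
      intro n hn
      induction n, hn using Nat.le_induction with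
      | base => rfl
      | succ n hn ih => have := hzero n hn; linarith
    have hlin : ∀ j : ℕ, phat (N + j) = phat N + j * (phat (N + 1) - phat N) := by
      intro j
      induction j with
      | zero => simp
      | succ j ih =>
        have h1 : N ≤ N + j := by omega
        have h2 := hdconst (N + j) h1
        have : N + (j + 1) = (N + j) + 1 := by omega
        rw [this]
        push_cast
        linarith
    have hd := hdneg N
    obtain ⟨j, hj⟩ := exists_nat_gt (phat N / (-(phat (N + 1) - phat N)))
    have hj2 : phat N < (j : ℝ) * (-(phat (N + 1) - phat N)) := by
      rw [div_lt_iff₀ (by linarith)] at hj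
      linarith
    have := hlin j
    have := hnn (N + j)
    nlinarith
  -- D and e
  set D : ℕ → ℝ := fun k => ∑ i ∈ Finset.range k, (phat i - ptil i) * ((k : ℝ) - i) with hDdef
  set e : ℕ → ℝ := fun k => ∑ i ∈ Finset.range (k + 1), (phat i - ptil i) with hedef
  have hDsucc : ∀ k, D (k + 1) = D k + e k := by
    intro k
    simp only [hDdef, hedef]
    have hcongr : ∀ i ∈ Finset.range (k + 1),
        (phat i - ptil i) * (((k + 1 : ℕ) : ℝ) - i)
          = (phat i - ptil i) * ((k : ℝ) - i) + (phat i - ptil i) := by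
      intro i _
      push_cast
      ring
    rw [Finset.sum_congr rfl hcongr, Finset.sum_add_distrib,
      Finset.sum_range_succ (f := fun i => (phat i - ptil i) * ((k : ℝ) - i))]
    simp
  have htel : ∀ a b, a ≤ b → D b = D a + ∑ k ∈ Finset.Ico a b, e k := by
    intro a b h
    induction b, h using Nat.le_induction with
    | base => simp
    | succ b hb ih => rw [hDsucc b, ih, Finset.sum_Ico_succ_top hb]; ring
  have hemono : ∀ k, s ≤ k → e (k + 1) = e k + phat (k + 1) := by
    intro k hk
    have hp0 : ptil (k + 1) = 0 := by
      by_contra h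
      have := hs _ h
      omega
    simp only [hedef]
    rw [Finset.sum_range_succ, hp0]
    ring
  have henondec : ∀ a b, s ≤ a → a ≤ b → e a ≤ e b := by
    intro a b hsa h
    induction b, h using Nat.le_induction with
    | base => exact le_rfl
    | succ b hb ih =>
      have := hemono b (le_trans hsa hb)
      have := hpos (b + 1)
      linarith
  have hestrict : ∀ a b, s ≤ a → a < b → e a < e b := by
    intro a b hsa h
    have h1 := hemono a hsa
    have h2 := henondec (a + 1) b (by omega) (by omega)
    have := hpos (a + 1)
    linarith
  -- three knots
  obtain ⟨m1, hm1, hΔ1⟩ := hknots s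
  obtain ⟨m2, hm2, hΔ2⟩ := hknots (m1 + 1)
  obtain ⟨m3, hm3, hΔ3⟩ := hknots (m2 + 1)
  set k1 := m1 + 1
  set k2 := m2 + 1
  set k3 := m3 + 1
  have hD1 : D k1 = 0 := hknot m1 hpos hΔ1
  have hD2 : D k2 = 0 := hknot m2 hpos hΔ2
  have hD3 : D k3 = 0 := hknot m3 hpos hΔ3
  have hsk1 : s ≤ k1 := by omega
  have hk12 : k1 < k2 := by omega
  have hk23 : k2 < k3 := by omega
  have he1nonneg : 0 ≤ e k1 := by
    have h01 : 0 ≤ D (k1 + 1) := hD0 (k1 + 1)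
    have h02 := hDsucc k1
    rw [hD1] at h02
    linarith
  rcases eq_or_lt_of_le he1nonneg with heq | hlt
  · -- e k1 = 0 : use interval [k2, k3)
    have hsum : D k3 = D k2 + ∑ k ∈ Finset.Ico k2 k3, e k := htel k2 k3 (le_of_lt hk23)
    rw [hD2, hD3] at hsum
    have hposum : 0 < ∑ k ∈ Finset.Ico k2 k3, e k := by
      apply Finset.sum_pos
      · intro k hk
        rw [Finset.mem_Ico] at hk
        have h1 : e k1 < e k2 := hestrict k1 k2 hsk1 hk12
        have h2 : e k2 ≤ e k := henondec k2 k (by omega) hk.1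
        linarith [heq.symm ▸ h1]
      · exact Finset.nonempty_Ico.2 hk23
    linarith
  · -- 0 < e k1 : use interval [k1, k2)
    have hsum : D k2 = D k1 + ∑ k ∈ Finset.Ico k1 k2, e k := htel k1 k2 (le_of_lt hk12)
    rw [hD1, hD2] at hsum
    have hposum : 0 < ∑ k ∈ Finset.Ico k1 k2, e k := by
      apply Finset.sum_pos
      · intro k hk
        rw [Finset.mem_Ico] at hk
        have h2 : e k1 ≤ e k := henondec k1 k hsk1 hk.1
        linarith
      · exact Finset.nonempty_Ico.2 hk12
    linarith



set_option maxHeartbeats 1000000 in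
/-- Lemma 1: there is a unique square-summable minimizer of `Q` over `𝒦`,
and it has finite support. -/
theorem stmt_1 (ptil : ℕ → ℝ) (hptil : IsFinPMF ptil) :
    ∃! phat : ℕ → ℝ,
      MemK phat ∧
      Summable (fun i => (phat i) ^ 2) ∧
      (∀ f : ℕ → ℝ, MemK f → Summable (fun i => (f i) ^ 2) →
        Crit ptil phat ≤ Crit ptil f) ∧
      (Function.support phat).Finite := by
  -- `ptil` is square-summable, hence determines an element `u` of `ℓ²`
  have hsq_ptil : Summable fun i => ptil i ^ 2 := by
    apply summable_of_ne_finset_zero (s := hptil.2.1.toFinset)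
    intro i hi
    have : ptil i = 0 := by simpa [Function.mem_support] using hi
    simp [this]
  set u : E2 := ⟨ptil, memℓp_of_sq_summable hsq_ptil⟩ with hu
  -- the convex cone
  set KS : Set E2 := {F : E2 | ConvexNat ⇑F ∧ ∀ i, 0 ≤ F i} with hKS
  have h0 : (0 : E2) ∈ KS := by
    constructor
    · intro i; simp [lp.coeFn_zero]
    · intro i; simp [lp.coeFn_zero]
  have hcombo : ∀ (a b : ℝ) (F G : E2) (j : ℕ),
      (a • F + b • G : E2) j = a * F j + b * G j := by
    intro a b F G j
    have h1 := lp.coeFn_add (a • F) (b • G)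
    have h2 := lp.coeFn_smul a F
    have h3 := lp.coeFn_smul b G
    calc (a • F + b • G : E2) j = (a • F : E2) j + (b • G : E2) j := by
          rw [h1]; simp
      _ = a * F j + b * G j := by rw [h2, h3]; simp
  have hconvex : Convex ℝ KS := by
    intro F hF G hG a b ha hb _
    constructor
    · intro i
      have h1 := hF.1 i
      have h2 := hG.1 i
      rw [hcombo, hcombo, hcombo]
      nlinarith [mul_nonneg ha h1, mul_nonneg hb h2]
    · intro i
      rw [hcombo]
      exact add_nonneg (mul_nonneg ha (hF.2 i)) (mul_nonneg hb (hG.2 i))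
  have hclosed : IsClosed KS := by
    have hc1 : IsClosed {F : E2 | ConvexNat ⇑F} := by
      have : {F : E2 | ConvexNat ⇑F}
          = ⋂ i : ℕ, {F : E2 | 0 ≤ F (i + 2) - 2 * F (i + 1) + F i} := by
        ext F
        simp [ConvexNat, Set.mem_iInter]
      rw [this]
      refine isClosed_iInter fun i => isClosed_le continuous_const ?_
      exact ((eval_continuous (i + 2)).sub
        (continuous_const.mul (eval_continuous (i + 1)))).add (eval_continuous i)
    have hc2 : IsClosed {F : E2 | ∀ i, 0 ≤ F i} := by
      have : {F : E2 | ∀ i, 0 ≤ F i} = ⋂ i : ℕ, {F : E2 | 0 ≤ F i} := by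
        ext F; simp [Set.mem_iInter]
      rw [this]
      exact isClosed_iInter fun i => isClosed_le continuous_const (eval_continuous i)
    have : KS = {F : E2 | ConvexNat ⇑F} ∩ {F : E2 | ∀ i, 0 ≤ F i} := rfl
    rw [this]
    exact hc1.inter hc2
  -- projection of `u` on `KS`
  obtain ⟨v, hvK, hv⟩ :=
    exists_norm_eq_iInf_of_complete_convex ⟨0, h0⟩ hclosed.isComplete hconvex u
  set phat : ℕ → ℝ := ⇑v with hphat
  have hsumv : Summable fun i => phat i ^ 2 := sq_summable_of_memℓp (lp.memℓp v)
  have hKv : MemK phat := ⟨hvK.1, hvK.2, tendsto_zero_of_sq_summable hsumv⟩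
  -- translation between `Crit` and norms
  have CritEq : ∀ F : E2, Crit ptil ⇑F
      = (1 / 2) * ‖u - F‖ ^ 2 - (1 / 2) * ‖u‖ ^ 2 := by
    intro F
    have h1 : ∑' i, (F i) ^ 2 = ‖F‖ ^ 2 := (norm_sq_tsum F).symm
    have h2 : ∑' i, F i * ptil i = ⟪F, u⟫_ℝ := (inner_tsum F u).symm
    have h3 : ‖u - F‖ ^ 2 = ‖u‖ ^ 2 - 2 * ⟪u, F⟫_ℝ + ‖F‖ ^ 2 := norm_sub_sq_real u F
    have h4 : ⟪F, u⟫_ℝ = ⟪u, F⟫_ℝ := real_inner_comm u F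
    rw [Crit, h1, h2, h4, h3]
    ring
  have hbdd : BddBelow (Set.range fun w : KS => ‖u - w‖) := by
    refine ⟨0, ?_⟩
    rintro x ⟨w, rfl⟩
    exact norm_nonneg _
  -- minimality of `phat`
  have hmin : ∀ f : ℕ → ℝ, MemK f → Summable (fun i => (f i) ^ 2) →
      Crit ptil phat ≤ Crit ptil f := by
    intro f hf hf2
    set F : E2 := ⟨f, memℓp_of_sq_summable hf2⟩ with hF
    have hFKS : F ∈ KS := ⟨hf.1, hf.2.1⟩
    have hle : ‖u - v‖ ≤ ‖u - F‖ := by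
      rw [hv]
      exact ciInf_le hbdd ⟨F, hFKS⟩
    have hsq := pow_le_pow_left₀ (norm_nonneg _) hle 2
    have e1 := CritEq v
    have e2 := CritEq F
    have hcoe : Crit ptil ⇑F = Crit ptil f := rfl
    rw [← hcoe]
    rw [e1, e2]
    linarith
  -- variational characterization
  have hchar : ∀ w ∈ KS, ⟪u - v, w - v⟫_ℝ ≤ 0 :=
    (norm_eq_iInf_iff_real_inner_le_zero hconvex hvK).1 hv
  -- the `lp` element corresponding to `Tfun k`
  have hTmem : ∀ k : ℕ, Memℓp (Tfun k) 2 := fun k =>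
    memℓp_of_sq_summable (Tfun_sq_summable k)
  set Tlp : ℕ → E2 := fun k => ⟨Tfun k, hTmem k⟩ with hTlp
  have innerT : ∀ k : ℕ, ⟪u - v, Tlp k⟫_ℝ
      = -∑ i ∈ Finset.range k, (phat i - ptil i) * ((k : ℝ) - i) := by
    intro k
    rw [inner_tsum]
    have hz : ∀ i ∉ Finset.range k, (u - v) i * (Tlp k) i = 0 := by
      intro i hi
      have : (Tlp k) i = 0 := Tfun_eq_zero (by simpa using hi)
      rw [this, mul_zero]
    rw [tsum_eq_sum hz, ← Finset.sum_neg_distrib]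
    apply Finset.sum_congr rfl
    intro i hi
    have hik : i ≤ k := le_of_lt (by simpa using hi)
    have h1 : (u - v) i = ptil i - phat i := by
      rw [lp.coeFn_sub]
      simp [hu, hphat]
    have h2 : (Tlp k) i = (k : ℝ) - i := Tfun_eq hik
    rw [h1, h2]
    ring
  -- the first variational inequality
  have hD0 : ∀ k : ℕ, 0 ≤ ∑ i ∈ Finset.range k, (phat i - ptil i) * ((k : ℝ) - i) := by
    intro k
    have hw : v + Tlp k ∈ KS := by
      constructor
      · intro i
        have hcoe : ∀ j, (v + Tlp k : E2) j = phat j + Tfun k j := by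
          intro j
          rw [lp.coeFn_add]
          simp [hphat, hTlp]
        rw [hcoe, hcoe, hcoe]
        have h1 := hvK.1 i
        have h2 := Tfun_second k i
        split_ifs at h2 with h3 <;> linarith
      · intro i
        have hcoe : (v + Tlp k : E2) i = phat i + Tfun k i := by
          rw [lp.coeFn_add]
          simp [hphat, hTlp]
        rw [hcoe]
        exact add_nonneg (hvK.2 i) (Tfun_nonneg k i)
    have h := hchar (v + Tlp k) hw
    rw [add_sub_cancel_left, innerT] at h
    linarith
  -- the second variational equality at knots
  have hknotlem : ∀ m : ℕ, (∀ i, 0 < phat i) →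
      0 < phat (m + 2) - 2 * phat (m + 1) + phat m →
      ∑ i ∈ Finset.range (m + 1), (phat i - ptil i) * (((m + 1 : ℕ) : ℝ) - i) = 0 := by
    intro m hpos hΔ
    set k := m + 1 with hk
    have hne : (Finset.range k).Nonempty := ⟨0, by simp [hk]⟩
    set c := (Finset.range k).inf' hne phat with hc
    have hcpos : 0 < c := (Finset.lt_inf'_iff hne).2 fun i _ => hpos i
    have hkpos : (0 : ℝ) < k := by positivity
    set ε := min (phat (m + 2) - 2 * phat (m + 1) + phat m) (c / k) with hε
    have hεpos : 0 < ε := lt_min hΔ (div_pos hcpos hkpos)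
    set w : E2 := v - ε • Tlp k with hwdef
    have hwcoe : ∀ j, w j = phat j - ε * Tfun k j := by
      intro j
      rw [hwdef, lp.coeFn_sub, Pi.sub_apply, lp.coeFn_smul, Pi.smul_apply]
      simp [hphat, hTlp]
    have hwKS : w ∈ KS := by
      constructor
      · intro i
        rw [hwcoe, hwcoe, hwcoe]
        have h1 := hvK.1 i
        have h2 := Tfun_second k i
        by_cases h3 : i + 1 = k
        · rw [if_pos h3] at h2
          have h4 : ε ≤ phat (m + 2) - 2 * phat (m + 1) + phat m := min_le_left _ _
          have h5 : i = m := by omega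
          subst h5
          have h6 : ε * Tfun k (i + 2) - 2 * (ε * Tfun k (i + 1)) + ε * Tfun k i = ε := by
            linear_combination ε * h2
          linarith
        · rw [if_neg h3] at h2
          have h6 : ε * Tfun k (i + 2) - 2 * (ε * Tfun k (i + 1)) + ε * Tfun k i = 0 := by
            linear_combination ε * h2
          linarith
      · intro j
        rw [hwcoe]
        by_cases hj : j < k
        · have hTle : Tfun k j ≤ (k : ℝ) := Tfun_le k j
          have hTnn : 0 ≤ Tfun k j := Tfun_nonneg k j
          have h1 : ε ≤ c / k := min_le_right _ _
          have h2 : ε * Tfun k j ≤ (c / k) * k := by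
            apply mul_le_mul h1 hTle hTnn
            positivity
          rw [div_mul_cancel₀ _ (ne_of_gt hkpos)] at h2
          have h3 : c ≤ phat j := Finset.inf'_le _ (by simpa using hj)
          linarith
        · rw [Tfun_eq_zero (by omega)]
          have := hvK.2 j
          simp [hphat] at this ⊢
          linarith
    have h := hchar w hwKS
    have hsub : w - v = -(ε • Tlp k) := by rw [hwdef]; abel
    rw [hsub, inner_neg_right, real_inner_smul_right, innerT] at h
    have hD := hD0 k
    have : ∑ i ∈ Finset.range k, (phat i - ptil i) * ((k : ℝ) - i) = 0 := by nlinarith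
    convert this using 3
  -- max of support of ptil
  obtain ⟨s, hs⟩ := hptil.2.1.bddAbove
  have hs' : ∀ i, ptil i ≠ 0 → i ≤ s := fun i hi => hs (Function.mem_support.2 hi)
  have hfin : (Function.support phat).Finite :=
    support_finite_aux ptil phat s hs' hKv hD0 hknotlem
  -- assemble
  refine ⟨phat, ⟨hKv, hsumv, hmin, hfin⟩, ?_⟩
  rintro q ⟨hqK, hq2, hqmin, _⟩
  set Fq : E2 := ⟨q, memℓp_of_sq_summable hq2⟩ with hFqdef
  have hFqKS : Fq ∈ KS := ⟨hqK.1, hqK.2.1⟩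
  have hcrit1 : Crit ptil q ≤ Crit ptil phat := hqmin phat hKv hsumv
  have hcrit2 : Crit ptil phat ≤ Crit ptil q := hmin q hqK hq2
  have hcriteq : Crit ptil q = Crit ptil phat := le_antisymm hcrit1 hcrit2
  have e1 := CritEq v
  have e2 := CritEq Fq
  have hcoeq : Crit ptil ⇑Fq = Crit ptil q := rfl
  have hsqeq : ‖u - Fq‖ ^ 2 = ‖u - v‖ ^ 2 := by
    rw [hcoeq, hcriteq] at e2
    rw [e1] at e2
    linarith
  have hnormeq : ‖u - Fq‖ = ‖u - v‖ := by
    have h := congrArg Real.sqrt hsqeq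
    rwa [Real.sqrt_sq (norm_nonneg _), Real.sqrt_sq (norm_nonneg _)] at h
  have hqinf : ‖u - Fq‖ = ⨅ w : KS, ‖u - w‖ := by rw [hnormeq]; exact hv
  have hchar2 := (norm_eq_iInf_iff_real_inner_le_zero hconvex hFqKS).1 hqinf
  have h1 := hchar Fq hFqKS
  have h2 := hchar2 v hvK
  have key : ⟪Fq - v, Fq - v⟫_ℝ ≤ 0 := by
    have eA : (u - v) - (u - Fq) = Fq - v := by abel
    have eB : ⟪Fq - v, Fq - v⟫_ℝ = ⟪u - v, Fq - v⟫_ℝ - ⟪u - Fq, Fq - v⟫_ℝ := by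
      rw [← inner_sub_left, eA]
    have eC : ⟪u - Fq, Fq - v⟫_ℝ = -⟪u - Fq, v - Fq⟫_ℝ := by
      rw [← inner_neg_right, neg_sub]
    rw [eB, eC]
    linarith
  have hFqv : Fq = v := sub_eq_zero.1 (real_inner_self_nonpos.1 key)
  have : ⇑Fq = ⇑v := congrArg _ hFqv
  rw [hphat, ← this]
end
end

section
/- Let p̃ be a probability mass function on ℕ with finite support and let p̂ be the unique minimizer of Q over 𝒦. Then for all l ≥ 1, H_{p̂}(l−1) ≥ H_{p̃}(l−1), with equality whenever p̂ has a change of slope at l, i.e., whenever p̂(l) − p̂(l−1) < p̂(l+1) − p̂(l). -/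
open scoped BigOperators

noncomputable section

/-- `F_p(j) = ∑_{i=0}^{j} p(i)`. -/
def Fcum (p : ℕ → ℝ) (j : ℕ) : ℝ := ∑ i ∈ Finset.range (j + 1), p i

/-- `H_p(j) = ∑_{i=0}^{j} F_p(i)`. -/
def Hcum (p : ℕ → ℝ) (j : ℕ) : ℝ := ∑ i ∈ Finset.range (j + 1), Fcum p i

-- second difference of tent function
lemma g_second_diff (l : ℕ) (i : ℕ) :
    ((l - (i+2) : ℕ) : ℝ) - 2 * ((l - (i+1) : ℕ) : ℝ) + ((l - i : ℕ) : ℝ)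
      = if i + 1 = l then 1 else 0 := by
  rcases le_or_gt l i with h | h
  · have h1 : l - i = 0 := by omega
    have h2 : l - (i+1) = 0 := by omega
    have h3 : l - (i+2) = 0 := by omega
    have h4 : ¬ (i + 1 = l) := by omega
    simp [h1, h2, h3, h4]
  · rcases eq_or_lt_of_le (Nat.succ_le_of_lt h) with h' | h'
    · have h1 : l - i = 1 := by omega
      have h2 : l - (i+1) = 0 := by omega
      have h3 : l - (i+2) = 0 := by omega
      simp [h1, h2, h3, ← h']
    · have h4 : ¬ (i + 1 = l) := by omega
      rw [if_neg h4]
      rw [Nat.cast_sub (by omega), Nat.cast_sub (by omega), Nat.cast_sub (by omega)]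
      push_cast
      ring

-- slopes are monotone
lemma slope_mono {f : ℕ → ℝ} (hf : ConvexNat f) : Monotone (fun i => f (i+1) - f i) := by
  apply monotone_nat_of_le_succ
  intro i
  have := hf i
  show f (i+1) - f i ≤ f (i+1+1) - f (i+1)
  linarith

-- f in K is antitone
lemma memK_antitone {f : ℕ → ℝ} (hf : MemK f) (i : ℕ) : f (i+1) ≤ f i := by
  by_contra hcon
  push_neg at hcon
  set d := f (i+1) - f i with hd
  have hd0 : 0 < d := by rw [hd]; linarith
  have hstep : ∀ k : ℕ, f i + k * d ≤ f (i + k) := by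
    intro k
    induction k with
    | zero => simp
    | succ n ih =>
      have h1 : f (i+n+1) - f (i+n) ≥ d := slope_mono hf.1 (Nat.le_add_right i n)
      push_cast
      have : i + (n+1) = (i + n) + 1 := by ring
      rw [this]
      nlinarith
  obtain ⟨N, hN⟩ := (Filter.tendsto_atTop'.mp hf.2.2 (Set.Iio d) (Iio_mem_nhds hd0))
  set k := max N 1 with hk
  have h1 : f (i + k) < d := by
    have := hN (i + k) (by omega)
    simpa using this
  have h2 : f i + k * d ≤ f (i + k) := hstep k
  have h3 : (1 : ℝ) ≤ (k : ℝ) := by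
    have : 1 ≤ k := le_max_right N 1
    exact_mod_cast this
  have h4 : 0 ≤ f i := hf.2.1 i
  nlinarith

lemma hcum_eq (p : ℕ → ℝ) (l : ℕ) :
    ∑ j ∈ Finset.range l, Fcum p j = ∑ i ∈ Finset.range l, ((l - i : ℕ) : ℝ) * p i := by
  induction l with
  | zero => simp
  | succ n ih =>
    rw [Finset.sum_range_succ, ih, Fcum,
      Finset.sum_range_succ (f := fun i => ((n + 1 - i : ℕ) : ℝ) * p i)]
    have h1 : ((n + 1 - n : ℕ) : ℝ) = 1 := by norm_num
    rw [h1, one_mul, Finset.sum_range_succ (f := p), ← add_assoc]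
    congr 1
    rw [← Finset.sum_add_distrib]
    apply Finset.sum_congr rfl
    intro i hi
    have hi' : i < n := Finset.mem_range.mp hi
    have h2 : (n + 1 - i : ℕ) = (n - i) + 1 := by omega
    rw [h2]
    push_cast
    ring

-- lower bound on [0, l-1] for convex functions
lemma convex_lower {f : ℕ → ℝ} (hf : ConvexNat f) (m : ℕ) :
    ∀ k, k ≤ m → f m + k * (f m - f (m+1)) ≤ f (m - k) := by
  intro k
  induction k with
  | zero => simp
  | succ n ih =>
    intro hn
    have hn' : n ≤ m := by omega
    have ihn := ih hn'
    have hmono : f (m - n - 1 + 1) - f (m - n - 1) ≤ f (m + 1) - f m :=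
      slope_mono hf (by omega)
    have he : m - n - 1 + 1 = m - n := by omega
    have he2 : m - (n+1) = m - n - 1 := by omega
    rw [he] at hmono
    rw [he2]
    push_cast
    linarith

lemma crit_expand (ptil phat : ℕ → ℝ) (hptil : (Function.support ptil).Finite)
    (hphat2 : Summable (fun i => (phat i) ^ 2)) (l : ℕ) (ε : ℝ) :
    Crit ptil (fun i => phat i + ε * ((l - i : ℕ) : ℝ)) =
      Crit ptil phat
        + ε * (∑ i ∈ Finset.range l, ((l - i : ℕ) : ℝ) * (phat i - ptil i))
        + ε ^ 2 * ((∑ i ∈ Finset.range l, ((l - i : ℕ) : ℝ) ^ 2) / 2) := by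
  set g : ℕ → ℝ := fun i => ((l - i : ℕ) : ℝ) with hg
  have hg0 : ∀ i ∉ Finset.range l, g i = 0 := by
    intro i hi
    have : l - i = 0 := by
      have := Finset.mem_range.not.mp hi
      omega
    simp [hg, this]
  have hsum1 : Summable (fun i => 2 * ε * phat i * g i + ε ^ 2 * g i ^ 2) :=
    summable_of_ne_finset_zero (s := Finset.range l)
      (fun i hi => by simp [hg0 i hi])
  have hsum2 : Summable (fun i => phat i * ptil i) :=
    summable_of_ne_finset_zero (s := hptil.toFinset)
      (fun i hi => by
        have : ptil i = 0 := by simpa using (by simpa using hi : i ∉ Function.support ptil)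
        simp [this])
  have hsum3 : Summable (fun i => (ε * g i) * ptil i) :=
    summable_of_ne_finset_zero (s := Finset.range l)
      (fun i hi => by simp [hg0 i hi])
  have e1 : (fun i => (phat i + ε * g i) ^ 2)
      = fun i => phat i ^ 2 + (2 * ε * phat i * g i + ε ^ 2 * g i ^ 2) := by
    funext i; ring
  have e2 : (fun i => (phat i + ε * g i) * ptil i)
      = fun i => phat i * ptil i + (ε * g i) * ptil i := by
    funext i; ring
  have t1 : ∑' i, (phat i + ε * g i) ^ 2
      = (∑' i, phat i ^ 2) + ∑ i ∈ Finset.range l, (2 * ε * phat i * g i + ε ^ 2 * g i ^ 2) := by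
    have hx : ∑' i, (2 * ε * phat i * g i + ε ^ 2 * g i ^ 2)
        = ∑ i ∈ Finset.range l, (2 * ε * phat i * g i + ε ^ 2 * g i ^ 2) :=
      tsum_eq_sum (fun i hi => by simp [hg0 i hi])
    rw [e1, Summable.tsum_add hphat2 hsum1, hx]
  have t2 : ∑' i, (phat i + ε * g i) * ptil i
      = (∑' i, phat i * ptil i) + ∑ i ∈ Finset.range l, (ε * g i) * ptil i := by
    have hx : ∑' i, (ε * g i) * ptil i = ∑ i ∈ Finset.range l, (ε * g i) * ptil i :=
      tsum_eq_sum (fun i hi => by simp [hg0 i hi])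
    rw [e2, Summable.tsum_add hsum2 hsum3, hx]
  simp only [Crit]
  rw [t1, t2]
  have s1 : ∑ i ∈ Finset.range l, (2 * ε * phat i * g i + ε ^ 2 * g i ^ 2)
      = 2 * ε * (∑ i ∈ Finset.range l, g i * phat i)
        + ε ^ 2 * ∑ i ∈ Finset.range l, g i ^ 2 := by
    rw [Finset.sum_add_distrib, Finset.mul_sum, Finset.mul_sum]
    congr 1
    · apply Finset.sum_congr rfl; intro i _; ring
  have s2 : ∑ i ∈ Finset.range l, (ε * g i) * ptil i
      = ε * ∑ i ∈ Finset.range l, g i * ptil i := by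
    rw [Finset.mul_sum]
    apply Finset.sum_congr rfl; intro i _; ring
  have s3 : ∑ i ∈ Finset.range l, g i * (phat i - ptil i)
      = (∑ i ∈ Finset.range l, g i * phat i) - ∑ i ∈ Finset.range l, g i * ptil i := by
    rw [← Finset.sum_sub_distrib]
    apply Finset.sum_congr rfl; intro i _; ring
  rw [s1, s2, s3]
  ring

lemma tendsto_perturb {phat : ℕ → ℝ} (hK : Filter.Tendsto phat Filter.atTop (nhds 0))
    (l : ℕ) (ε : ℝ) :
    Filter.Tendsto (fun i => phat i + ε * ((l - i : ℕ) : ℝ)) Filter.atTop (nhds 0) := by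
  apply hK.congr'
  filter_upwards [Filter.eventually_ge_atTop l] with n hn
  have : l - n = 0 := by omega
  simp [this]

lemma summable_perturb {phat : ℕ → ℝ} (h2 : Summable (fun i => (phat i) ^ 2))
    (l : ℕ) (ε : ℝ) :
    Summable (fun i => (phat i + ε * ((l - i : ℕ) : ℝ)) ^ 2) := by
  have hs : Summable (fun i =>
      2 * ε * phat i * ((l - i : ℕ) : ℝ) + ε ^ 2 * ((l - i : ℕ) : ℝ) ^ 2) :=
    summable_of_ne_finset_zero (s := Finset.range l)
      (fun i hi => by
        have : l - i = 0 := by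
          have := Finset.mem_range.not.mp hi
          omega
        simp [this])
  apply (h2.add hs).congr
  intro i
  ring

lemma memK_perturb_pos {phat : ℕ → ℝ} (hK : MemK phat) (l : ℕ) {ε : ℝ} (hε : 0 ≤ ε) :
    MemK (fun i => phat i + ε * ((l - i : ℕ) : ℝ)) := by
  refine ⟨?_, ?_, tendsto_perturb hK.2.2 l ε⟩
  · intro i
    have hgd := g_second_diff l i
    have hp := hK.1 i
    simp only
    by_cases hi : i + 1 = l
    · rw [if_pos hi] at hgd
      nlinarith
    · rw [if_neg hi] at hgd
      nlinarith
  · intro i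
    have h1 : (0:ℝ) ≤ ((l - i : ℕ) : ℝ) := Nat.cast_nonneg _
    have h2 := hK.2.1 i
    positivity

lemma memK_perturb_neg {phat : ℕ → ℝ} (hK : MemK phat) (m : ℕ) {ε : ℝ} (hε : 0 < ε)
    (hδ : ε ≤ phat (m + 2) - 2 * phat (m + 1) + phat m)
    (hc : ε ≤ phat m - phat (m + 1)) (hm : ε ≤ phat m) :
    MemK (fun i => phat i + (-ε) * ((m + 1 - i : ℕ) : ℝ)) := by
  refine ⟨?_, ?_, tendsto_perturb hK.2.2 (m + 1) (-ε)⟩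
  · intro i
    have hgd := g_second_diff (m + 1) i
    have hp := hK.1 i
    simp only
    by_cases hi : i + 1 = m + 1
    · have : i = m := by omega
      subst this
      rw [if_pos hi] at hgd
      nlinarith
    · rw [if_neg hi] at hgd
      nlinarith
  · intro i
    simp only
    by_cases hi : m + 1 ≤ i
    · have h0 : m + 1 - i = 0 := by omega
      have := hK.2.1 i
      simp [h0]
      linarith
    · have hil : i ≤ m := by omega
      have hlow := convex_lower hK.1 m (m - i) (by omega)
      have he : m - (m - i) = i := by omega
      rw [he] at hlow
      have hcast : (m + 1 - i : ℕ) = (m - i) + 1 := by omega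
      rw [hcast]
      push_cast
      have hk0 : (0:ℝ) ≤ ((m - i : ℕ) : ℝ) := Nat.cast_nonneg _
      nlinarith [mul_nonneg hk0 (sub_nonneg.mpr hc)]

/-- Lemma 2 (direct part): for all `l ≥ 1`, `H_{p̂}(l−1) ≥ H_{p̃}(l−1)`, with equality
whenever `p̂` has a change of slope at `l`. -/
theorem stmt_12 (ptil : ℕ → ℝ) (hptil : IsFinPMF ptil)
    (phat : ℕ → ℝ) (hphatK : MemK phat)
    (hphat2 : Summable (fun i => (phat i) ^ 2))
    (hmin : ∀ f : ℕ → ℝ, MemK f → Summable (fun i => (f i) ^ 2) →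
      Crit ptil phat ≤ Crit ptil f) :
    ∀ l : ℕ, 1 ≤ l →
      Hcum ptil (l - 1) ≤ Hcum phat (l - 1) ∧
      (phat l - phat (l - 1) < phat (l + 1) - phat l →
        Hcum phat (l - 1) = Hcum ptil (l - 1)) := by
  intro l hl
  obtain ⟨m, rfl⟩ : ∃ m, l = m + 1 := ⟨l - 1, by omega⟩
  set A : ℝ := ∑ i ∈ Finset.range (m + 1), ((m + 1 - i : ℕ) : ℝ) * (phat i - ptil i) with hA
  set B : ℝ := ∑ i ∈ Finset.range (m + 1), ((m + 1 - i : ℕ) : ℝ) ^ 2 with hB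
  have hBpos : 0 < B := by
    have h1 : (((m + 1 - 0 : ℕ) : ℝ)) ^ 2 ≤ B := by
      rw [hB]
      exact Finset.single_le_sum (f := fun i => ((m + 1 - i : ℕ) : ℝ) ^ 2)
        (fun i _ => sq_nonneg _) (Finset.mem_range.mpr (by omega))
    have h2 : (1 : ℝ) ≤ ((m + 1 - 0 : ℕ) : ℝ) := by
      have : (1 : ℕ) ≤ m + 1 - 0 := by omega
      exact_mod_cast this
    nlinarith
  have hkey : ∀ ε : ℝ, MemK (fun i => phat i + ε * ((m + 1 - i : ℕ) : ℝ)) →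
      0 ≤ ε * A + ε ^ 2 * (B / 2) := by
    intro ε hKε
    have h := hmin _ hKε (summable_perturb hphat2 (m + 1) ε)
    have hex := crit_expand ptil phat hptil.2.1 hphat2 (m + 1) ε
    rw [← hA, ← hB] at hex
    rw [hex] at h
    linarith
  have hApos : 0 ≤ A := by
    by_contra hA'
    push_neg at hA'
    have hε : 0 < -A / B := div_pos (by linarith) hBpos
    have hk := hkey (-A / B) (memK_perturb_pos hphatK (m + 1) (le_of_lt hε))
    have hkB : 0 ≤ ((-A / B) * A + (-A / B) ^ 2 * (B / 2)) * B ^ 2 :=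
      mul_nonneg hk (by positivity)
    have heq : ((-A / B) * A + (-A / B) ^ 2 * (B / 2)) * B ^ 2 = -(A ^ 2 * B) / 2 := by
      field_simp
      ring
    rw [heq] at hkB
    have h4 : 0 < A ^ 2 := by nlinarith
    nlinarith
  have hHphat : Hcum phat m = ∑ i ∈ Finset.range (m + 1), ((m + 1 - i : ℕ) : ℝ) * phat i := by
    simp only [Hcum]
    exact hcum_eq phat (m + 1)
  have hHptil : Hcum ptil m = ∑ i ∈ Finset.range (m + 1), ((m + 1 - i : ℕ) : ℝ) * ptil i := by
    simp only [Hcum]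
    exact hcum_eq ptil (m + 1)
  have hAeq : A = Hcum phat m - Hcum ptil m := by
    rw [hHphat, hHptil, hA, ← Finset.sum_sub_distrib]
    apply Finset.sum_congr rfl
    intro i _
    ring
  constructor
  · simp only [Nat.add_sub_cancel]
    linarith
  · intro hslope
    simp only [Nat.add_sub_cancel] at hslope ⊢
    have hδ : 0 < phat (m + 2) - 2 * phat (m + 1) + phat m := by
      have : m + 1 + 1 = m + 2 := by omega
      rw [this] at hslope
      linarith
    have hc : 0 < phat m - phat (m + 1) := by
      have h1 : phat (m + 2) ≤ phat (m + 1) := by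
        have := memK_antitone hphatK (m + 1)
        simpa using this
      have : m + 1 + 1 = m + 2 := by omega
      rw [this] at hslope
      linarith
    have hpm : 0 < phat m := by
      have := hphatK.2.1 (m + 1)
      linarith
    set ε₀ : ℝ := min (phat (m + 2) - 2 * phat (m + 1) + phat m)
      (min (phat m - phat (m + 1)) (phat m)) with hε₀
    have hε₀pos : 0 < ε₀ := lt_min hδ (lt_min hc hpm)
    have hkey2 : ∀ ε : ℝ, 0 < ε → ε ≤ ε₀ → A ≤ ε * (B / 2) := by
      intro ε h1 h2
      have hK' := memK_perturb_neg hphatK m h1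
        (le_trans h2 (min_le_left _ _))
        (le_trans h2 (le_trans (min_le_right _ _) (min_le_left _ _)))
        (le_trans h2 (le_trans (min_le_right _ _) (min_le_right _ _)))
      have hk := hkey (-ε) hK'
      have h3 : ε * A ≤ ε * (ε * (B / 2)) := by nlinarith
      exact (mul_le_mul_iff_right₀ h1).mp h3
    have hAle : A ≤ 0 := by
      by_contra h
      push_neg at h
      set ε : ℝ := min ε₀ (A / B) with hε
      have hεpos : 0 < ε := lt_min hε₀pos (div_pos h hBpos)
      have h1 := hkey2 ε hεpos (min_le_left _ _)
      have hεB : ε * B ≤ A := by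
        have h2 : ε ≤ A / B := min_le_right _ _
        calc ε * B ≤ (A / B) * B := mul_le_mul_of_nonneg_right h2 hBpos.le
        _ = A := by field_simp
      nlinarith
    have hA0 : A = 0 := le_antisymm hAle hApos
    linarith
end
end

section
/- Let p̃ be a probability mass function on ℕ with finite support and let p̂ be the unique minimizer of Q over 𝒦. If p ∈ 𝒦 satisfies H_p(l−1) ≥ H_{p̃}(l−1) for all l ≥ 1, with equality whenever p(l) − p(l−1) < p(l+1) − p(l), then p = p̂. -/
open scoped BigOperators

noncomputable section

open Filter

def Dd (f : ℕ → ℝ) (j : ℕ) : ℝ := f (j+2) - 2*f (j+1) + f j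

lemma Dd_nonneg {f : ℕ → ℝ} (hf : MemK f) (j : ℕ) : 0 ≤ Dd f j := by
  have := hf.1 j; unfold Dd; linarith

lemma slope_mono_s13 {f : ℕ → ℝ} (hf : MemK f) : ∀ a b, a ≤ b →
    f (a+1) - f a ≤ f (b+1) - f b := by
  intro a b hab
  induction b, hab using Nat.le_induction with
  | base => exact le_refl _
  | succ n hn ih =>
    have := hf.1 n
    calc f (a+1) - f a ≤ f (n+1) - f n := ih
    _ ≤ f (n+2) - f (n+1) := by linarith

lemma slope_nonpos {f : ℕ → ℝ} (hf : MemK f) (n : ℕ) : f (n+1) - f n ≤ 0 := by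
  by_contra h
  push_neg at h
  set c := f (n+1) - f n with hc
  have hb : ∀ m : ℕ, f n + m * c ≤ f (n + m) := by
    intro m
    induction m with
    | zero => simp
    | succ m ih =>
      have hs : c ≤ f (n + m + 1) - f (n + m) := slope_mono_s13 hf n (n + m) (Nat.le_add_right _ _)
      have : (n + (m+1)) = (n + m) + 1 := by ring
      rw [this]
      push_cast
      linarith
  have h1 : Tendsto (fun m : ℕ => f n + m * c) atTop atTop := by
    apply tendsto_atTop_add_const_left
    exact Tendsto.atTop_mul_const h (tendsto_natCast_atTop_atTop)
  have h2 : Tendsto (fun m : ℕ => f (n + m)) atTop atTop :=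
    tendsto_atTop_mono hb h1
  have h3 : Tendsto (fun m : ℕ => f (n + m)) atTop (nhds 0) := by
    have := hf.2.2.comp (tendsto_add_atTop_nat n)
    simpa [Function.comp_def, Nat.add_comm] using this
  exact not_tendsto_atTop_of_tendsto_nhds h3 h2

lemma f_antitone {f : ℕ → ℝ} (hf : MemK f) : ∀ a b, a ≤ b → f b ≤ f a := by
  intro a b hab
  induction b, hab using Nat.le_induction with
  | base => exact le_refl _
  | succ n hn ih =>
    have := slope_nonpos hf n
    linarith

lemma telescope {f : ℕ → ℝ} : ∀ a b, a ≤ b →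
    f a - f b = ∑ k ∈ Finset.Ico a b, (f k - f (k+1)) := by
  intro a b hab
  induction b, hab using Nat.le_induction with
  | base => simp
  | succ n hn ih =>
    rw [Finset.sum_Ico_succ_top hn, ← ih]
    ring

lemma key_bound {f : ℕ → ℝ} (hf : MemK f) (n : ℕ) :
    (n : ℝ) * (f n - f (n+1)) ≤ 2 * f (n/2) := by
  set m := n / 2 with hm
  have hmn : m ≤ n := Nat.div_le_self n 2
  have h1 : f m - f n = ∑ k ∈ Finset.Ico m n, (f k - f (k+1)) := telescope m n hmn
  have h2 : ((n - m : ℕ) : ℝ) * (f n - f (n+1)) ≤ ∑ k ∈ Finset.Ico m n, (f k - f (k+1)) := by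
    have : ∀ k ∈ Finset.Ico m n, f n - f (n+1) ≤ f k - f (k+1) := by
      intro k hk
      have hk' : k ≤ n := le_of_lt (Finset.mem_Ico.mp hk).2
      have := slope_mono_s13 hf k n hk'
      linarith
    calc ((n - m : ℕ) : ℝ) * (f n - f (n+1))
        = ∑ _k ∈ Finset.Ico m n, (f n - f (n+1)) := by
          rw [Finset.sum_const, Nat.card_Ico]; ring
      _ ≤ _ := Finset.sum_le_sum this
  have h3 : f m - f n ≥ ((n - m : ℕ) : ℝ) * (f n - f (n+1)) := by rw [h1]; exact h2
  have hd : 0 ≤ f n - f (n+1) := by have := slope_nonpos hf n; linarith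
  have hfn : 0 ≤ f n := hf.2.1 n
  have hnat : n ≤ 2 * (n - m) := by omega
  have hcast : (n : ℝ) ≤ 2 * ((n - m : ℕ) : ℝ) := by
    have := Nat.cast_le (α := ℝ) |>.mpr hnat
    push_cast at this
    linarith
  nlinarith [mul_le_mul_of_nonneg_right hcast hd]

lemma nat_div_tendsto : Tendsto (fun n : ℕ => n / 2) atTop atTop := by
  apply tendsto_atTop_atTop.mpr
  intro b
  exact ⟨2 * b, fun a ha => by omega⟩

lemma key_tendsto {f : ℕ → ℝ} (hf : MemK f) :
    Tendsto (fun n : ℕ => (n : ℝ) * (f n - f (n+1))) atTop (nhds 0) := by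
  apply squeeze_zero
  · intro n
    have := slope_nonpos hf n
    have : 0 ≤ f n - f (n+1) := by linarith
    positivity
  · exact fun n => key_bound hf n
  · have : Tendsto (fun n : ℕ => f (n / 2)) atTop (nhds 0) := hf.2.2.comp nat_div_tendsto
    simpa using this.const_mul 2

def Ker (i j : ℕ) : ℝ := ((j + 1 - i : ℕ) : ℝ)

lemma Ker_nonneg (i j : ℕ) : 0 ≤ Ker i j := Nat.cast_nonneg _

lemma partial_sum_eq {f : ℕ → ℝ} (i : ℕ) : ∀ N, i ≤ N →
    ∑ j ∈ Finset.range N, Dd f j * Ker i j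
      = f i - f N + ((N - i : ℕ) : ℝ) * (f (N+1) - f N) := by
  intro N hN
  induction N, hN using Nat.le_induction with
  | base =>
    have h0 : ∑ j ∈ Finset.range i, Dd f j * Ker i j = 0 := by
      apply Finset.sum_eq_zero
      intro j hj
      have : j + 1 - i = 0 := by
        have := Finset.mem_range.mp hj; omega
      simp [Ker, this]
    rw [h0]
    simp
  | succ N hN ih =>
    rw [Finset.sum_range_succ, ih]
    have c1 : ((N + 1 - i : ℕ) : ℝ) = (N : ℝ) - i + 1 := by
      have : (N + 1 - i : ℕ) = (N - i) + 1 := by omega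
      rw [this]
      push_cast [Nat.cast_sub hN]
      ring
    have c2 : ((N - i : ℕ) : ℝ) = (N : ℝ) - i := by
      push_cast [Nat.cast_sub hN]; ring
    rw [c2] at *
    simp only [Ker, c1, Dd]
    ring

lemma hasSum_rep {f : ℕ → ℝ} (hf : MemK f) (i : ℕ) :
    HasSum (fun j => Dd f j * Ker i j) (f i) := by
  have hnn : ∀ j, 0 ≤ Dd f j * Ker i j :=
    fun j => mul_nonneg (Dd_nonneg hf j) (Ker_nonneg i j)
  have hbound : ∀ n, ∑ j ∈ Finset.range n, Dd f j * Ker i j ≤ f i := by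
    intro n
    rcases le_or_gt i n with h | h
    · rw [partial_sum_eq i n h]
      have h1 : 0 ≤ f n := hf.2.1 n
      have h2 : f (n+1) - f n ≤ 0 := slope_nonpos hf n
      have h3 : (0:ℝ) ≤ ((n - i : ℕ) : ℝ) := Nat.cast_nonneg _
      nlinarith
    · calc ∑ j ∈ Finset.range n, Dd f j * Ker i j
          ≤ ∑ j ∈ Finset.range i, Dd f j * Ker i j := by
            apply Finset.sum_le_sum_of_subset_of_nonneg
            · exact Finset.range_subset_range.mpr h.le
            · intro j _ _; exact hnn j
        _ = f i - f i + ((i - i : ℕ) : ℝ) * (f (i+1) - f i) := partial_sum_eq i i le_rfl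
        _ ≤ f i := by simp [hf.2.1 i]
  have hsum : Summable (fun j => Dd f j * Ker i j) := summable_of_sum_range_le hnn hbound
  rw [hsum.hasSum_iff_tendsto_nat]
  have heq : ∀ᶠ n in atTop, ∑ j ∈ Finset.range n, Dd f j * Ker i j
      = f i - f n + ((n - i : ℕ) : ℝ) * (f (n+1) - f n) := by
    filter_upwards [eventually_ge_atTop i] with n hn
    exact partial_sum_eq i n hn
  rw [Filter.tendsto_congr' heq]
  have t1 : Tendsto (fun n : ℕ => f i - f n) atTop (nhds (f i)) := by
    simpa using (tendsto_const_nhds (x := f i)).sub hf.2.2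
  have t2 : Tendsto (fun n : ℕ => ((n - i : ℕ) : ℝ) * (f (n+1) - f n)) atTop (nhds 0) := by
    have habs : ∀ n, |((n - i : ℕ) : ℝ) * (f (n+1) - f n)| ≤ (n : ℝ) * (f n - f (n+1)) := by
      intro n
      have h2 : f (n+1) - f n ≤ 0 := slope_nonpos hf n
      have h4 : ((n - i : ℕ) : ℝ) ≤ (n : ℝ) := by
        exact_mod_cast Nat.cast_le.mpr (Nat.sub_le n i)
      have h3 : (0:ℝ) ≤ ((n - i : ℕ) : ℝ) := Nat.cast_nonneg _
      rw [abs_le]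
      constructor <;> nlinarith
    have := key_tendsto hf
    exact squeeze_zero_norm habs this
  simpa using t1.add t2

lemma Hcum_eq_ker_sum (q : ℕ → ℝ) (j : ℕ) :
    Hcum q j = ∑ i ∈ Finset.range (j + 1), Ker i j * q i := by
  induction j with
  | zero => simp [Hcum, Fcum, Ker]
  | succ j ih =>
    have hker : ∀ i ∈ Finset.range (j+2), Ker i (j+1) * q i = Ker i j * q i + q i := by
      intro i hi
      have hi' : i ≤ j + 1 := by have := Finset.mem_range.mp hi; omega
      have h1 : (j + 1 + 1 - i : ℕ) = (j + 1 - i) + 1 := by omega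
      simp only [Ker, h1]
      push_cast
      ring
    have hz : Ker (j+1) j = 0 := by
      have : (j + 1 - (j+1) : ℕ) = 0 := by omega
      simp [Ker, this]
    have hrhs : ∑ i ∈ Finset.range (j+2), Ker i (j+1) * q i
        = (∑ i ∈ Finset.range (j+1), Ker i j * q i) + Fcum q (j+1) := by
      rw [Finset.sum_congr rfl hker, Finset.sum_add_distrib,
        Finset.sum_range_succ (fun i => Ker i j * q i), hz]
      simp [Fcum]
    have hl : Hcum q (j+1) = Hcum q j + Fcum q (j+1) := Finset.sum_range_succ _ _
    rw [hl, hrhs, ih]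

lemma tsum_mul_eq {f q : ℕ → ℝ} (hf : MemK f) (hq : ∀ i, 0 ≤ q i) :
    ∑' i, ENNReal.ofReal (f i * q i)
      = ∑' j, ENNReal.ofReal (Dd f j) * ENNReal.ofReal (Hcum q j) := by
  have step1 : ∀ i, ENNReal.ofReal (f i * q i)
      = ∑' j, ENNReal.ofReal (Dd f j) * ENNReal.ofReal (Ker i j) * ENNReal.ofReal (q i) := by
    intro i
    have h1 : ENNReal.ofReal (f i) = ∑' j, ENNReal.ofReal (Dd f j * Ker i j) := by
      rw [← (hasSum_rep hf i).tsum_eq]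
      exact ENNReal.ofReal_tsum_of_nonneg
        (fun j => mul_nonneg (Dd_nonneg hf j) (Ker_nonneg i j)) (hasSum_rep hf i).summable
    rw [ENNReal.ofReal_mul (hf.2.1 i), h1, ← ENNReal.tsum_mul_right]
    congr 1
    funext j
    rw [ENNReal.ofReal_mul (Dd_nonneg hf j)]
  have step3 : ∀ j, (∑' i, ENNReal.ofReal (Dd f j) * ENNReal.ofReal (Ker i j) * ENNReal.ofReal (q i))
      = ENNReal.ofReal (Dd f j) * ENNReal.ofReal (Hcum q j) := by
    intro j
    have : ∀ i, ENNReal.ofReal (Dd f j) * ENNReal.ofReal (Ker i j) * ENNReal.ofReal (q i)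
        = ENNReal.ofReal (Dd f j) * ENNReal.ofReal (Ker i j * q i) := by
      intro i
      rw [ENNReal.ofReal_mul (Ker_nonneg i j), mul_assoc]
    rw [tsum_congr this, ENNReal.tsum_mul_left]
    congr 1
    have hz : ∀ i ∉ Finset.range (j+1), ENNReal.ofReal (Ker i j * q i) = 0 := by
      intro i hi
      have : (j + 1 - i : ℕ) = 0 := by
        have := Finset.mem_range.not.mp hi; omega
      simp [Ker, this]
    rw [tsum_eq_sum hz, ← ENNReal.ofReal_sum_of_nonneg
      (fun i _ => mul_nonneg (Ker_nonneg i j) (hq i)), ← Hcum_eq_ker_sum]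
  calc ∑' i, ENNReal.ofReal (f i * q i)
      = ∑' i, ∑' j, ENNReal.ofReal (Dd f j) * ENNReal.ofReal (Ker i j) * ENNReal.ofReal (q i) :=
        tsum_congr step1
    _ = ∑' j, ∑' i, ENNReal.ofReal (Dd f j) * ENNReal.ofReal (Ker i j) * ENNReal.ofReal (q i) :=
        ENNReal.tsum_comm
    _ = ∑' j, ENNReal.ofReal (Dd f j) * ENNReal.ofReal (Hcum q j) := tsum_congr step3

/-- Lemma 2 (converse part): if `p ∈ 𝒦` satisfies `H_p(l−1) ≥ H_{p̃}(l−1)` for all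
`l ≥ 1`, with equality whenever `p` has a change of slope at `l`, then `p = p̂`. -/
theorem stmt_13 (ptil : ℕ → ℝ) (hptil : IsFinPMF ptil)
    (phat : ℕ → ℝ) (hphatK : MemK phat)
    (hphat2 : Summable (fun i => (phat i) ^ 2))
    (hmin : ∀ f : ℕ → ℝ, MemK f → Summable (fun i => (f i) ^ 2) →
      Crit ptil phat ≤ Crit ptil f)
    (p : ℕ → ℝ) (hp : MemK p)
    (hH : ∀ l : ℕ, 1 ≤ l → Hcum ptil (l - 1) ≤ Hcum p (l - 1))
    (hHeq : ∀ l : ℕ, 1 ≤ l → p l - p (l - 1) < p (l + 1) - p l →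
      Hcum p (l - 1) = Hcum ptil (l - 1)) :
    p = phat := by
  obtain ⟨hptil_nn, hsupp, _⟩ := hptil
  have hpnn := hp.2.1
  have hfnn := hphatK.2.1
  -- products with ptil are summable (finite support)
  have hms : ∀ g : ℕ → ℝ, Summable (fun i => g i * ptil i) := by
    intro g
    apply summable_of_ne_finset_zero (s := hsupp.toFinset)
    intro b hb
    have : ptil b = 0 := by
      by_contra h
      exact hb (hsupp.mem_toFinset.mpr h)
    simp [this]
  -- ENNReal identity: ∑ p·p = ∑ p·ptil
  have E1 : ∑' i, ENNReal.ofReal (p i * p i) = ∑' i, ENNReal.ofReal (p i * ptil i) := by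
    rw [tsum_mul_eq hp hpnn, tsum_mul_eq hp hptil_nn]
    apply tsum_congr
    intro j
    rcases eq_or_lt_of_le (Dd_nonneg hp j) with h | h
    · rw [← h]; simp
    · have hc : p (j+1) - p ((j+1)-1) < p ((j+1)+1) - p (j+1) := by
        unfold Dd at h
        simp only [Nat.add_sub_cancel]
        linarith
      have heq := hHeq (j+1) (by omega) hc
      simp only [Nat.add_sub_cancel] at heq
      rw [heq]
  have hSpt : Summable (fun i => p i * ptil i) := hms p
  have hfin : ∑' i, ENNReal.ofReal (p i * p i) ≠ ⊤ := by
    rw [E1, ← ENNReal.ofReal_tsum_of_nonneg (fun i => mul_nonneg (hpnn i) (hptil_nn i)) hSpt]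
    exact ENNReal.ofReal_ne_top
  have hp2 : Summable (fun i => p i ^ 2) := by
    have h := ENNReal.summable_toReal hfin
    refine h.congr (fun i => ?_)
    rw [ENNReal.toReal_ofReal (mul_nonneg (hpnn i) (hpnn i))]
    ring
  have hpp : Summable (fun i => p i * p i) := hp2.congr (fun i => by ring)
  -- real equality B = Dp
  have hreal1 : ∑' i, p i * p i = ∑' i, p i * ptil i := by
    refine (ENNReal.ofReal_eq_ofReal_iff
      (tsum_nonneg (fun i => mul_nonneg (hpnn i) (hpnn i)))
      (tsum_nonneg (fun i => mul_nonneg (hpnn i) (hptil_nn i)))).mp ?_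
    rw [ENNReal.ofReal_tsum_of_nonneg (fun i => mul_nonneg (hpnn i) (hpnn i)) hpp,
      ENNReal.ofReal_tsum_of_nonneg (fun i => mul_nonneg (hpnn i) (hptil_nn i)) hSpt]
    exact E1
  -- ENNReal inequality: ∑ phat·ptil ≤ ∑ phat·p
  have E2 : ∑' i, ENNReal.ofReal (phat i * ptil i) ≤ ∑' i, ENNReal.ofReal (phat i * p i) := by
    rw [tsum_mul_eq hphatK hptil_nn, tsum_mul_eq hphatK hpnn]
    refine ENNReal.tsum_le_tsum (fun j => ?_)
    refine mul_le_mul_right (ENNReal.ofReal_le_ofReal ?_) _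
    have := hH (j+1) (by omega)
    simpa only [Nat.add_sub_cancel] using this
  have hfp : Summable (fun i => phat i * p i) := by
    refine Summable.of_nonneg_of_le (fun i => mul_nonneg (hfnn i) (hpnn i))
      (fun i => ?_) ((hphat2.add hp2).mul_left (1/2))
    nlinarith [sq_nonneg (phat i - p i)]
  have hfpt : Summable (fun i => phat i * ptil i) := hms phat
  have hreal2 : ∑' i, phat i * ptil i ≤ ∑' i, phat i * p i := by
    refine (ENNReal.ofReal_le_ofReal_iff
      (tsum_nonneg (fun i => mul_nonneg (hfnn i) (hpnn i)))).mp ?_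
    rw [ENNReal.ofReal_tsum_of_nonneg (fun i => mul_nonneg (hfnn i) (hptil_nn i)) hfpt,
      ENNReal.ofReal_tsum_of_nonneg (fun i => mul_nonneg (hfnn i) (hpnn i)) hfp]
    exact E2
  have hdiff : Summable (fun i => (phat i - p i)^2) :=
    ((hphat2.add hp2).sub (hfp.mul_left 2)).congr (fun i => by ring)
  have hT : ∑' i, (phat i - p i)^2
      = (∑' i, phat i ^ 2) + (∑' i, p i ^ 2) - 2 * (∑' i, phat i * p i) := by
    calc ∑' i, (phat i - p i)^2
        = ∑' i, ((phat i ^ 2 + p i ^ 2) - 2 * (phat i * p i)) :=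
          tsum_congr (fun i => by ring)
      _ = (∑' i, (phat i ^ 2 + p i ^ 2)) - ∑' i, 2 * (phat i * p i) :=
          Summable.tsum_sub (hphat2.add hp2) (hfp.mul_left 2)
      _ = (∑' i, phat i ^ 2) + (∑' i, p i ^ 2) - 2 * (∑' i, phat i * p i) := by
          rw [Summable.tsum_add hphat2 hp2, tsum_mul_left]
  have hB : ∑' i, p i ^ 2 = ∑' i, p i * p i := tsum_congr (fun i => by ring)
  have hcrit := hmin p hp hp2
  have hfinq : ∑' i, (phat i - p i)^2 ≤ 0 := by
    have h1 : Crit ptil phat - Crit ptil p ≥ (1/2) * ∑' i, (phat i - p i)^2 := by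
      unfold Crit
      rw [hT]
      rw [hB] at *
      linarith [hreal1, hreal2]
    linarith
  funext i
  have h2 : (phat i - p i)^2 ≤ 0 :=
    le_trans (hdiff.le_tsum i (fun j _ => sq_nonneg _)) hfinq
  have h3 : (phat i - p i)^2 = 0 := le_antisymm h2 (sq_nonneg _)
  have := sub_eq_zero.mp (sq_eq_zero_iff.mp h3)
  linarith
end
end
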